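/- Let j ≥ k ≥ t+2 and 0 ≤ s ≤ k-t-2, and let L(j,t) = (t+1) + (j-t+1)·log₂((t+1)(j-t+1)). If n ≥ L(j,t) - 1, then S(n-t-s, k-t-s) > (t+1)·(j-t+1)·S(n-t-s-1, k-t-s-1). -/

import Mathlib

/-- Stirling number of the second kind. -/
def stirling : ℕ → ℕ → ℕ
  | 0, 0 => 1
  | 0, _ + 1 => 0
  | _ + 1, 0 => 0
  | n + 1, k + 1 => stirling n k + (k + 1) * stirling n (k + 1)

/-- `L(k,t) = (t+1) + (k-t+1)·log₂((t+1)(k-t+1))`. -/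
noncomputable def Lfun (k t : ℕ) : ℝ :=
  ((t : ℝ) + 1) + ((k : ℝ) - t + 1) * Real.logb 2 (((t : ℝ) + 1) * ((k : ℝ) - t + 1))

lemma stirling_succ_succ (n k : ℕ) :
    stirling (n+1) (k+1) = stirling n k + (k+1) * stirling n (k+1) := rfl

lemma stirling_eq_zero (n k : ℕ) (h : n < k) : stirling n k = 0 := by
  induction n generalizing k with
  | zero => cases k with
    | zero => omega
    | succ k => rfl
  | succ n ih =>
    cases k with
    | zero => omega
    | succ k =>
      rw [stirling_succ_succ, ih k (by omega), ih (k+1) (by omega)]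
      ring

lemma stirling_self (n : ℕ) : stirling n n = 1 := by
  induction n with
  | zero => rfl
  | succ n ih => rw [stirling_succ_succ, ih, stirling_eq_zero n (n+1) (by omega)]; ring

lemma stirling_pos (n k : ℕ) (h1 : 1 ≤ k) (h2 : k ≤ n) : 0 < stirling n k := by
  induction n generalizing k with
  | zero => omega
  | succ n ih =>
    cases k with
    | zero => omega
    | succ k =>
      rw [stirling_succ_succ]
      rcases Nat.lt_or_ge n (k+1) with h | h
      · have : k = n := by omega
        subst this
        rw [stirling_self]; omega
      · have := ih (k+1) (by omega) h
        positivity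

/-- Key combinatorial estimate: `S(a+1,b+1)/S(a,b) ≥ ((b+1)/b)^(a-b)`. -/
lemma stirling_key : ∀ a b : ℕ, (b+1)^(a-b) * stirling a b ≤ b^(a-b) * stirling (a+1) (b+1) := by
  intro a
  induction a with
  | zero =>
    intro b
    cases b with
    | zero => simp [stirling_self]
    | succ b => simp [stirling_eq_zero 0 (b+1) (by omega)]
  | succ a ih =>
    intro b
    cases b with
    | zero => simp [show stirling (a+1) 0 = 0 from rfl]
    | succ b' =>
      rcases Nat.lt_or_ge a (b'+1) with hab | hab
      · rcases Nat.lt_or_ge (a+1) (b'+1) with h | h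
        · rw [stirling_eq_zero (a+1) (b'+1) h]; simp
        · have : a = b' := by omega
          subst this
          simp [stirling_self]
      · obtain ⟨c, rfl⟩ : ∃ c, a = b' + c + 1 := ⟨a - b' - 1, by omega⟩
        have e0 : b' + c + 1 - (b' + 1) = c := by omega
        have e1 : b' + c + 1 + 1 - (b' + 1) = c + 1 := by omega
        have e2 : b' + c + 1 - b' = c + 1 := by omega
        have h1 := ih (b' + 1)
        rw [e0] at h1
        have h2 := ih b'
        rw [e2] at h2
        rw [e1]
        set S1 := stirling (b' + c + 1) b' with hS1
        set S2 := stirling (b' + c + 1) (b' + 1) with hS2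
        set S3 := stirling (b' + c + 1 + 1) (b' + 1) with hS3
        set S4 := stirling (b' + c + 1 + 1) (b' + 1 + 1) with hS4
        have h2' : (b' + 1 + 1)^(c+1) * S1 ≤ (b' + 1)^(c+1) * S3 := by
          have hb1 : 0 < (b' + 1)^(c+1) := Nat.pow_pos (by omega)
          refine Nat.le_of_mul_le_mul_left ?_ hb1
          calc (b' + 1)^(c+1) * ((b' + 1 + 1)^(c+1) * S1)
              = (b' + 1 + 1)^(c+1) * ((b' + 1)^(c+1) * S1) := by ring
            _ ≤ (b' + 1 + 1)^(c+1) * (b'^(c+1) * S3) := Nat.mul_le_mul_left _ h2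
            _ = ((b' + 1 + 1) * b')^(c+1) * S3 := by rw [Nat.mul_pow]; ring
            _ ≤ ((b' + 1) * (b' + 1))^(c+1) * S3 := by
                apply Nat.mul_le_mul_right
                apply Nat.pow_le_pow_left
                nlinarith
            _ = (b' + 1)^(c+1) * ((b' + 1)^(c+1) * S3) := by rw [Nat.mul_pow]; ring
        have rA : stirling (b' + c + 1 + 1 + 1) (b' + 1 + 1) = S3 + (b' + 1 + 1) * S4 :=
          stirling_succ_succ (b' + c + 1 + 1) (b' + 1)
        have rB : S3 = S1 + (b' + 1) * S2 := stirling_succ_succ (b' + c + 1) b'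
        rw [rA, rB]
        have t2 : (b' + 1 + 1)^(c+1) * ((b' + 1) * S2) ≤ (b' + 1)^(c+1) * ((b' + 1 + 1) * S4) := by
          calc (b' + 1 + 1)^(c+1) * ((b' + 1) * S2)
              = (b' + 1) * (b' + 1 + 1) * ((b' + 1 + 1)^c * S2) := by ring
            _ ≤ (b' + 1) * (b' + 1 + 1) * ((b' + 1)^c * S4) := Nat.mul_le_mul_left _ h1
            _ = (b' + 1)^(c+1) * ((b' + 1 + 1) * S4) := by ring
        calc (b' + 1 + 1)^(c+1) * (S1 + (b' + 1) * S2)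
            = (b' + 1 + 1)^(c+1) * S1 + (b' + 1 + 1)^(c+1) * ((b' + 1) * S2) := by ring
          _ ≤ (b' + 1)^(c+1) * (S1 + (b' + 1) * S2) + (b' + 1)^(c+1) * ((b' + 1 + 1) * S4) := by
              rw [← rB]; exact Nat.add_le_add h2' t2
          _ = (b' + 1)^(c+1) * ((S1 + (b' + 1) * S2) + (b' + 1 + 1) * S4) := by ring

lemma log_pow_gt (m a b : ℕ) (h : 2^b < m^a) :
    (b:ℝ) * Real.log 2 < (a:ℝ) * Real.log m := by
  have h1 : ((2:ℝ))^b < (m:ℝ)^a := by exact_mod_cast h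
  have h2 := Real.log_lt_log (by positivity) h1
  rwa [Real.log_pow, Real.log_pow] at h2

lemma analytic_case (u p q : ℕ) (y : ℝ) (hy : (q:ℝ) * Real.log 2 < (p:ℝ) * y)
    (hcert : (u:ℝ) * (p:ℝ) < (q:ℝ) * ((u:ℝ) + 1 - (u:ℝ) * 0.6931472))
    (hq : 0 < q) (hyp : 0 < (p:ℝ)) :
    Real.log 2 * u * (1 + y) < ((u:ℝ)+1) * y := by
  have hl2 : Real.log 2 < 0.6931472 := by
    have := Real.log_two_lt_d9; linarith
  have hl2p : (0:ℝ) < Real.log 2 := Real.log_pos (by norm_num)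
  have hc : (0:ℝ) < (u:ℝ) + 1 - u * Real.log 2 := by
    have h1 : (u:ℝ) * Real.log 2 ≤ (u:ℝ) * 0.6931472 :=
      mul_le_mul_of_nonneg_left hl2.le (by positivity)
    nlinarith [hyp, hq, mul_pos (show (0:ℝ) < q by exact_mod_cast hq) hl2p]
  have h1 := mul_lt_mul_of_pos_right hy hc
  have h3 : (u:ℝ) * (p:ℝ) * Real.log 2 < (q:ℝ) * (((u:ℝ) + 1) - u * Real.log 2) * Real.log 2 := by
    apply mul_lt_mul_of_pos_right _ hl2p
    calc (u:ℝ) * (p:ℝ) < (q:ℝ) * ((u:ℝ) + 1 - (u:ℝ) * 0.6931472) := hcert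
      _ ≤ (q:ℝ) * (((u:ℝ) + 1) - u * Real.log 2) := by
          apply mul_le_mul_of_nonneg_left _ (by positivity)
          have h2 : (u:ℝ) * Real.log 2 ≤ (u:ℝ) * 0.6931472 :=
            mul_le_mul_of_nonneg_left hl2.le (by positivity)
          linarith
  nlinarith [h1, h3, hyp]

lemma analytic (u : ℕ) (hu : 2 ≤ u) :
    Real.log 2 * u * (1 + Real.log ((u:ℝ)+1)) < ((u:ℝ)+1) * Real.log ((u:ℝ)+1) := by
  rcases Nat.lt_or_ge u 10 with h10 | h10
  · interval_cases u
    · have h := log_pow_gt 3 19 30 (by norm_num)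
      refine analytic_case 2 19 30 _ ?_ (by norm_num) (by norm_num) (by norm_num)
      norm_num at h ⊢
      convert h using 3 <;> norm_num
    · have h := log_pow_gt 4 5 9 (by norm_num)
      refine analytic_case 3 5 9 _ ?_ (by norm_num) (by norm_num) (by norm_num)
      norm_num at h ⊢
      convert h using 3 <;> norm_num
    · have h := log_pow_gt 5 9 20 (by norm_num)
      refine analytic_case 4 9 20 _ ?_ (by norm_num) (by norm_num) (by norm_num)
      norm_num at h ⊢
      convert h using 3 <;> norm_num
    · have h := log_pow_gt 6 13 33 (by norm_num)
      refine analytic_case 5 13 33 _ ?_ (by norm_num) (by norm_num) (by norm_num)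
      norm_num at h ⊢
      convert h using 3 <;> norm_num
    · have h := log_pow_gt 7 2 5 (by norm_num)
      refine analytic_case 6 2 5 _ ?_ (by norm_num) (by norm_num) (by norm_num)
      norm_num at h ⊢
      convert h using 3 <;> norm_num
    · have h := log_pow_gt 8 7 20 (by norm_num)
      refine analytic_case 7 7 20 _ ?_ (by norm_num) (by norm_num) (by norm_num)
      norm_num at h ⊢
      convert h using 3 <;> norm_num
    · have h := log_pow_gt 9 5 15 (by norm_num)
      refine analytic_case 8 5 15 _ ?_ (by norm_num) (by norm_num) (by norm_num)
      norm_num at h ⊢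
      convert h using 3 <;> norm_num
    · have h := log_pow_gt 10 10 33 (by norm_num)
      refine analytic_case 9 10 33 _ ?_ (by norm_num) (by norm_num) (by norm_num)
      norm_num at h ⊢
      convert h using 3 <;> norm_num
  · have h := log_pow_gt 10 10 33 (by norm_num)
    have hmono : Real.log 10 ≤ Real.log ((u:ℝ)+1) := by
      apply Real.log_le_log (by norm_num)
      have : (10:ℝ) ≤ (u:ℝ) := by exact_mod_cast h10
      linarith
    refine analytic_case u 10 33 _ ?_ ?_ (by norm_num) (by norm_num)
    · norm_num at h
      push_cast
      linarith [h, hmono]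
    · have : (0:ℝ) ≤ (u:ℝ) := by positivity
      push_cast
      nlinarith [this]

set_option maxHeartbeats 2000000 in
theorem stmt_9 (n j k t s : ℕ) (hjk : k ≤ j) (hkt : t + 2 ≤ k)
    (hs : s ≤ k - t - 2) (hn : (n : ℝ) ≥ Lfun j t - 1) :
    stirling (n - t - s) (k - t - s) >
      (t + 1) * (j - t + 1) * stirling (n - t - s - 1) (k - t - s - 1) := by
  have htj : t ≤ j := by omega
  have htk : t ≤ k := by omega
  set u := k - t with hu_def
  have hu2 : 2 ≤ u := by omega
  set r := k - t - s with hr_def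
  have hr2 : 2 ≤ r := by omega
  have hru : r ≤ u := by omega
  have hl2p : (0:ℝ) < Real.log 2 := Real.log_pos (by norm_num)
  simp only [Lfun] at hn
  set C0 : ℝ := ((t:ℝ) + 1) * ((j:ℝ) - t + 1) with hC0
  have hjt : ((u:ℝ)) ≤ (j:ℝ) - t := by
    have h1 : ((u:ℕ):ℝ) ≤ ((j - t:ℕ):ℝ) := by exact_mod_cast (show u ≤ j - t by omega)
    have h2 : ((j - t:ℕ):ℝ) = (j:ℝ) - t := by
      push_cast [htj]; ring
    linarith [h1, h2.ge, h2.le]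
  have huR : (2:ℝ) ≤ (u:ℝ) := by exact_mod_cast hu2
  have htR : (0:ℝ) ≤ (t:ℝ) := Nat.cast_nonneg t
  have hC0ge : ((u:ℝ) + 1) ≤ C0 := by
    rw [hC0]
    nlinarith [hjt, htR, huR]
  have hC0gt1 : (1:ℝ) < C0 := by linarith
  set x := Real.log C0 with hx
  have hxpos : 0 < x := Real.log_pos hC0gt1
  have hxy : Real.log ((u:ℝ)+1) ≤ x := Real.log_le_log (by positivity) hC0ge
  have hl2lt : Real.log 2 < 1 := by have := Real.log_two_lt_d9; linarith
  have hupos : (0:ℝ) < (u:ℝ) := by linarith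
  -- analytic inequality extended from log(u+1) to x
  have hana : Real.log 2 * u * (1 + x) < ((u:ℝ)+1) * x := by
    have h0 := analytic u hu2
    have hcoef : (0:ℝ) ≤ ((u:ℝ)+1) - Real.log 2 * u := by
      nlinarith [mul_lt_mul_of_pos_left hl2lt hupos]
    nlinarith [mul_le_mul_of_nonneg_right hxy hcoef, h0]
  -- from hn : real bound on n
  have hlogb : Real.logb 2 C0 = x / Real.log 2 := by
    rw [Real.logb, hx]
  rw [hlogb] at hn
  have hnk : (k:ℝ) + (u:ℝ) * x < (n:ℝ) := by
    have h1 : ((u:ℝ)+1) * x ≤ ((j:ℝ)-t+1) * x := by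
      apply mul_le_mul_of_nonneg_right _ hxpos.le
      linarith [hjt]
    have h3 : (u:ℝ) * (1 + x) < ((j:ℝ)-t+1) * (x / Real.log 2) := by
      rw [mul_div_assoc']
      rw [lt_div_iff₀ hl2p]
      nlinarith [hana, h1]
    have hk' : (k:ℝ) = (t:ℝ) + u := by
      have h : k = t + u := by omega
      rw [h]; push_cast; ring
    linarith [hn, h3, hk']
  have hkn : k < n := by
    have hx2 : (0:ℝ) < (u:ℝ) * x := mul_pos hupos hxpos
    have : (k:ℝ) < (n:ℝ) := by linarith
    exact_mod_cast this
  set N := n - k with hN_def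
  have hNcast : ((N:ℕ):ℝ) = (n:ℝ) - k := by
    rw [hN_def]
    push_cast [Nat.cast_sub hkn.le]
    ring
  have hNx : (u:ℝ) * x < (N:ℝ) := by rw [hNcast]; linarith
  have hrR2 : (2:ℝ) ≤ (r:ℝ) := by exact_mod_cast hr2
  have hrpos : (0:ℝ) < (r:ℝ) - 1 := by linarith
  have hrR : (0:ℝ) < (r:ℝ) := by linarith
  -- x < N * (log r - log (r-1))
  have hrlog : x < (N:ℝ) * (Real.log r - Real.log ((r:ℝ)-1)) := by
    have hstep : (1:ℝ)/r ≤ Real.log r - Real.log ((r:ℝ)-1) := by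
      have h := Real.log_le_sub_one_of_pos (show (0:ℝ) < ((r:ℝ)-1)/r by positivity)
      rw [Real.log_div (by linarith) (by linarith)] at h
      have heq : ((r:ℝ)-1)/r - 1 = -(1/r) := by field_simp; ring
      linarith
    have hNnn : (0:ℝ) ≤ (N:ℝ) := Nat.cast_nonneg N
    have hruR : (r:ℝ) ≤ (u:ℝ) := by exact_mod_cast hru
    have hxr : x * r < N := by nlinarith [hNx, hruR, hxpos]
    have h4 : x < (N:ℝ) * (1/r) := by
      rw [mul_one_div, lt_div_iff₀ hrR]
      exact hxr
    have h5 : (N:ℝ) * (1/r) ≤ (N:ℝ) * (Real.log r - Real.log ((r:ℝ)-1)) :=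
      mul_le_mul_of_nonneg_left hstep hNnn
    linarith
  -- real power inequality
  have hpow : C0 * ((r:ℝ)-1)^N < (r:ℝ)^N := by
    have hL : (0:ℝ) < C0 * ((r:ℝ)-1)^N := by positivity
    have hR : (0:ℝ) < ((r:ℝ))^N := by positivity
    rw [← Real.exp_log hL, ← Real.exp_log hR]
    apply Real.exp_lt_exp.2
    rw [Real.log_mul (by positivity) (by positivity), Real.log_pow, Real.log_pow]
    nlinarith [hrlog]
  -- apply the combinatorial lemma
  have e1 : r - 1 + 1 = r := by omega
  have e2 : n - t - s - 1 + 1 = n - t - s := by omega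
  have e3 : (n - t - s - 1) - (r - 1) = N := by omega
  have hkey := stirling_key (n - t - s - 1) (r - 1)
  rw [e1, e2, e3] at hkey
  set A : ℕ := stirling (n - t - s) r with hA
  set B : ℕ := stirling (n - t - s - 1) (r - 1) with hB
  have hBpos : 0 < B := by
    rw [hB]
    exact stirling_pos _ _ (by omega) (by omega)
  have hr1cast : (((r - 1:ℕ)):ℝ) = (r:ℝ) - 1 := by
    push_cast [Nat.cast_sub (show 1 ≤ r by omega)]; ring
  have hkeyR : ((r:ℝ))^N * (B:ℝ) ≤ ((r:ℝ)-1)^N * (A:ℝ) := by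
    have h := (Nat.cast_le (α := ℝ)).mpr hkey
    push_cast at h
    rw [hr1cast] at h
    convert h using 2 <;> push_cast <;> ring
  have hBR : (1:ℝ) ≤ (B:ℝ) := by exact_mod_cast hBpos
  have hfin : C0 * (B:ℝ) < (A:ℝ) := by
    have hpow' : C0 * B * ((r:ℝ)-1)^N < (r:ℝ)^N * B := by
      calc C0 * (B:ℝ) * ((r:ℝ)-1)^N = (C0 * ((r:ℝ)-1)^N) * B := by ring
        _ < ((r:ℝ)^N) * B := by
            apply mul_lt_mul_of_pos_right hpow
            linarith
    have hlt : C0 * (B:ℝ) * ((r:ℝ)-1)^N < (A:ℝ) * ((r:ℝ)-1)^N := by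
      calc C0 * (B:ℝ) * ((r:ℝ)-1)^N < (r:ℝ)^N * B := hpow'
        _ ≤ ((r:ℝ)-1)^N * (A:ℝ) := hkeyR
        _ = (A:ℝ) * ((r:ℝ)-1)^N := by ring
    have hp : (0:ℝ) < ((r:ℝ)-1)^N := by positivity
    exact lt_of_mul_lt_mul_right hlt hp.le
  have hgoal : (((t + 1) * (j - t + 1) * B : ℕ):ℝ) < (A:ℝ) := by
    have hcast : (((t + 1) * (j - t + 1) * B : ℕ):ℝ) = C0 * (B:ℝ) := by
      push_cast [Nat.cast_sub htj]
      rw [hC0]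
      try ring
    rw [hcast]; exact hfin
  exact_mod_cast hgoal
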